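/- arXiv:2508.06397 — 2 statements merged into one kernel-verified Lean document; each statement's English description precedes it below -/
import Mathlib

section
/- Let D ≥ 1 be an integer, let ξ : ℝ_+^D → ℝ be locally Lipschitz, convex, ℝ_+^D-increasing with ξ(0) = 0, and let χ : ℝ_+^D → ℝ be ℝ_+^D-increasing and Lipschitz with Lipschitz constant L. Set C = sup{ |ξ(z)| : z ∈ ℝ_+^D, |z| ≤ L }. Then for all t, t' ≥ 0 and all x, x' ∈ ℝ_+^D, |S_tχ(x) − S_{t'}χ(x')| ≤ C·|t−t'| + L·|x−x'|. -/
open MeasureTheory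
open scoped NNReal

/-- The nonnegative orthant `ℝ_+^D` in `ℝ^D`. -/
def orthant (D : ℕ) : Set (EuclideanSpace ℝ (Fin D)) := {x | ∀ i, 0 ≤ x i}

/-- The monotone conjugate `(tξ)*(y) = sup_{z ∈ ℝ_+^D} (z·y − tξ(z))`, valued in
`ℝ ∪ {+∞}` (formalized as `EReal`). -/
noncomputable def tConj (D : ℕ) (t : ℝ) (ξ : EuclideanSpace ℝ (Fin D) → ℝ)
    (y : EuclideanSpace ℝ (Fin D)) : EReal :=
  ⨆ z : orthant D, (((inner ℝ z.1 y : ℝ) - t * ξ z.1 : ℝ) : EReal)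

/-- The Hopf–Lax value `S_tχ(x) = sup_{y ∈ ℝ_+^D} (χ(y) − (tξ)*(y−x))`, valued in `EReal`. -/
noncomputable def hopfLax (D : ℕ) (t : ℝ) (ξ χ : EuclideanSpace ℝ (Fin D) → ℝ)
    (x : EuclideanSpace ℝ (Fin D)) : EReal :=
  ⨆ y : orthant D, ((χ y.1 : EReal) - tConj D t ξ (y.1 - x))

namespace HLaux

noncomputable def pPart {D : ℕ} (w : EuclideanSpace ℝ (Fin D)) : EuclideanSpace ℝ (Fin D) :=
  WithLp.toLp 2 (fun i => max (w i) 0)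

@[simp] lemma pPart_apply {D : ℕ} (w : EuclideanSpace ℝ (Fin D)) (i : Fin D) :
    pPart w i = max (w i) 0 := rfl

lemma zero_mem {D : ℕ} : (0 : EuclideanSpace ℝ (Fin D)) ∈ orthant D := by intro i; simp

lemma add_mem {D : ℕ} {a b : EuclideanSpace ℝ (Fin D)} (ha : a ∈ orthant D)
    (hb : b ∈ orthant D) : a + b ∈ orthant D := by
  intro i
  have := ha i; have := hb i
  simp only [PiLp.add_apply]
  linarith

lemma smul_mem {D : ℕ} {c : ℝ} (hc : 0 ≤ c) {a : EuclideanSpace ℝ (Fin D)}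
    (ha : a ∈ orthant D) : c • a ∈ orthant D := by
  intro i
  simp only [PiLp.smul_apply, smul_eq_mul]
  exact mul_nonneg hc (ha i)

lemma pPart_mem {D : ℕ} (w : EuclideanSpace ℝ (Fin D)) : pPart w ∈ orthant D := by
  intro i; simp

lemma real_inner_sum {D : ℕ} (z y : EuclideanSpace ℝ (Fin D)) :
    (inner ℝ z y : ℝ) = ∑ i, z i * y i := by
  simp [PiLp.inner_apply, mul_comm]

lemma pPart_add_eq {D : ℕ} (x y : EuclideanSpace ℝ (Fin D)) :
    y + pPart (x - y) = pPart (y - x) + x := by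
  ext i
  simp only [PiLp.add_apply, pPart_apply, PiLp.sub_apply]
  rcases le_total (x i) (y i) with h | h
  · rw [max_eq_right (by linarith), max_eq_left (by linarith)]; ring
  · rw [max_eq_left (by linarith), max_eq_right (by linarith)]; ring

lemma isClosed_orthant {D : ℕ} : IsClosed (orthant D) := by
  have : orthant D = ⋂ i, {x : EuclideanSpace ℝ (Fin D) | 0 ≤ x i} := by
    ext x; simp [orthant]
  rw [this]
  exact isClosed_iInter fun i =>
    isClosed_le continuous_const ((continuous_apply i).comp (PiLp.continuous_ofLp 2 _))

lemma helper2 (c1 c2 A : ℝ) (e : EReal) (hc : c1 ≤ c2) (hA : (A : EReal) ≤ e) :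
    (c1 : EReal) - e ≤ ((c2 - A : ℝ) : EReal) := by
  by_cases h : e = ⊤
  · simp [h, sub_eq_add_neg]
  · have hb : e ≠ ⊥ := ne_bot_of_le_ne_bot (EReal.coe_ne_bot A) hA
    lift e to ℝ using ⟨h, hb⟩
    rw [← EReal.coe_sub, EReal.coe_le_coe_iff]
    have := EReal.coe_le_coe_iff.mp hA
    linarith

lemma helper1 (c1 c2 r b : ℝ) (e1 e2 : EReal) (hc : c1 ≤ c2 + r) (he : e2 ≤ e1)
    (hb : (c2 : EReal) - e2 ≤ (b : EReal)) : (c1 : EReal) - e1 ≤ ((b + r : ℝ) : EReal) := by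
  by_cases h1 : e1 = ⊤
  · simp [h1, sub_eq_add_neg]
  · have h2t : e2 ≠ ⊤ := ne_top_of_le_ne_top h1 he
    by_cases h2b : e2 = ⊥
    · rw [h2b] at hb
      simp [sub_eq_add_neg] at hb
    · have h1b : e1 ≠ ⊥ := ne_bot_of_le_ne_bot h2b he
      lift e1 to ℝ using ⟨h1, h1b⟩
      lift e2 to ℝ using ⟨h2t, h2b⟩
      rw [← EReal.coe_sub, EReal.coe_le_coe_iff] at hb ⊢
      have h3 : e2 ≤ e1 := by exact_mod_cast he
      linarith

section tconj

variable {D : ℕ} {ξ : EuclideanSpace ℝ (Fin D) → ℝ}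
  (hξmono : ∀ x ∈ orthant D, ∀ y ∈ orthant D, ξ x ≤ ξ (x + y)) (hξ0 : ξ 0 = 0)
  {L : ℝ≥0} {C : ℝ} (hCb : ∀ z ∈ orthant D, ‖z‖ ≤ (L : ℝ) → |ξ z| ≤ C)
  {t t' : ℝ} (ht : 0 ≤ t)

include hξ0 in
lemma tConj_nonneg (w : EuclideanSpace ℝ (Fin D)) {t : ℝ} : 0 ≤ tConj D t ξ w := by
  have h := le_iSup (fun z : orthant D => (((inner ℝ z.1 w : ℝ) - t * ξ z.1 : ℝ) : EReal))
    ⟨0, zero_mem⟩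
  exact le_trans (by simp [hξ0]) h

include hξmono hξ0 in
omit ht in
lemma xi_nonneg {z : EuclideanSpace ℝ (Fin D)} (hz : z ∈ orthant D) : 0 ≤ ξ z := by
  have h := hξmono 0 zero_mem z hz
  rwa [zero_add, hξ0] at h

include hξmono hξ0 ht in
lemma tConj_zero_eq : tConj D t ξ 0 = 0 := by
  refine le_antisymm (iSup_le ?_) (tConj_nonneg hξ0 0)
  rintro ⟨z, hz⟩
  have h1 : 0 ≤ ξ z := xi_nonneg hξmono hξ0 hz
  have : ((inner ℝ z 0 : ℝ) - t * ξ z : ℝ) ≤ 0 := by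
    rw [inner_zero_right]
    have : 0 ≤ t * ξ z := mul_nonneg ht h1
    linarith
  calc (((inner ℝ z 0 : ℝ) - t * ξ z : ℝ) : EReal) ≤ ((0 : ℝ) : EReal) := by
        exact_mod_cast this
    _ = 0 := by simp

include hξmono hξ0 hCb ht in
lemma tConj_lower {u : EuclideanSpace ℝ (Fin D)} (hu : u ∈ orthant D) :
    (((L : ℝ) * ‖u‖ - t * C : ℝ) : EReal) ≤ tConj D t ξ u := by
  by_cases h0 : u = 0
  · subst h0
    rw [tConj_zero_eq hξmono hξ0 ht]
    have hC0 : 0 ≤ C := le_trans (abs_nonneg _) (hCb 0 zero_mem (by simp))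
    have : (L : ℝ) * ‖(0 : EuclideanSpace ℝ (Fin D))‖ - t * C ≤ 0 := by
      simp only [norm_zero, mul_zero, zero_sub, neg_nonpos]
      exact mul_nonneg ht hC0
    exact_mod_cast this
  · have hun : 0 < ‖u‖ := norm_pos_iff.mpr h0
    set z : EuclideanSpace ℝ (Fin D) := ((L : ℝ) / ‖u‖) • u with hzdef
    have hzO : z ∈ orthant D := smul_mem (div_nonneg L.coe_nonneg hun.le) hu
    have hz_norm : ‖z‖ = (L : ℝ) := by
      rw [hzdef, norm_smul, Real.norm_eq_abs, abs_of_nonneg (div_nonneg L.coe_nonneg hun.le)]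
      field_simp
    have hinner : (inner ℝ z u : ℝ) = (L : ℝ) * ‖u‖ := by
      rw [hzdef, real_inner_smul_left, real_inner_self_eq_norm_sq]
      field_simp
    have hxiC : ξ z ≤ C := le_trans (le_abs_self _) (hCb z hzO hz_norm.le)
    have hfin : (L : ℝ) * ‖u‖ - t * C ≤ (inner ℝ z u : ℝ) - t * ξ z := by
      rw [hinner]
      have := mul_le_mul_of_nonneg_left hxiC ht
      linarith
    refine le_trans ?_ (le_iSup (fun z : orthant D =>
      (((inner ℝ z.1 u : ℝ) - t * ξ z.1 : ℝ) : EReal)) ⟨z, hzO⟩)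
    exact_mod_cast hfin

include hξmono ht in
lemma tConj_pPart_le (w : EuclideanSpace ℝ (Fin D)) :
    tConj D t ξ (pPart w) ≤ tConj D t ξ w := by
  apply iSup_le
  rintro ⟨z, hz⟩
  set z' : EuclideanSpace ℝ (Fin D) := WithLp.toLp 2 (fun i => if 0 ≤ w i then z i else 0) with hz'def
  have hz'O : z' ∈ orthant D := by
    intro i
    show (0 : ℝ) ≤ if 0 ≤ w i then z i else 0
    split
    · exact hz i
    · exact le_refl 0
  have hdiff : z - z' ∈ orthant D := by
    intro i
    have : (z - z') i = z i - (if 0 ≤ w i then z i else 0) := by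
      simp [PiLp.sub_apply, hz'def]
    rw [this]
    split
    · simp
    · simpa using hz i
  have hinner : (inner ℝ z (pPart w) : ℝ) = (inner ℝ z' w : ℝ) := by
    rw [real_inner_sum, real_inner_sum]
    apply Finset.sum_congr rfl
    intro i _
    show z i * max (w i) 0 = (if 0 ≤ w i then z i else 0) * w i
    by_cases h : 0 ≤ w i
    · rw [max_eq_left h, if_pos h]
    · rw [max_eq_right (le_of_not_ge h), if_neg h]
      simp
  have hxi : ξ z' ≤ ξ z := by
    have h := hξmono z' hz'O (z - z') hdiff
    rwa [add_sub_cancel] at h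
  have hreal : (inner ℝ z (pPart w) : ℝ) - t * ξ z ≤ (inner ℝ z' w : ℝ) - t * ξ z' := by
    rw [hinner]
    have := mul_le_mul_of_nonneg_left hxi ht
    linarith
  refine le_trans ?_ (le_iSup (fun z : orthant D =>
    (((inner ℝ z.1 w : ℝ) - t * ξ z.1 : ℝ) : EReal)) ⟨z', hz'O⟩)
  exact_mod_cast hreal

include hξmono hξ0 in
omit ht in
lemma tConj_anti_t {w : EuclideanSpace ℝ (Fin D)} {t t' : ℝ} (ht' : 0 ≤ t') (htt : t' ≤ t) :
    tConj D t ξ w ≤ tConj D t' ξ w := by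
  apply iSup_le
  rintro ⟨z, hz⟩
  have h1 : 0 ≤ ξ z := xi_nonneg hξmono hξ0 hz
  have hreal : (inner ℝ z w : ℝ) - t * ξ z ≤ (inner ℝ z w : ℝ) - t' * ξ z := by
    have := mul_le_mul_of_nonneg_right htt h1
    linarith
  refine le_trans ?_ (le_iSup (fun z : orthant D =>
    (((inner ℝ z.1 w : ℝ) - t' * ξ z.1 : ℝ) : EReal)) ⟨z, hz⟩)
  exact_mod_cast hreal

omit ht in
lemma tConj_scale {t t' : ℝ} (ht' : 0 ≤ t') (ht0 : 0 < t)
    (u : EuclideanSpace ℝ (Fin D)) (A : ℝ) (hA : tConj D t ξ u ≤ (A : EReal)) :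
    tConj D t' ξ ((t' / t) • u) ≤ ((t' / t * A : ℝ) : EReal) := by
  apply iSup_le
  rintro ⟨z, hz⟩
  have h1 : (inner ℝ z u : ℝ) - t * ξ z ≤ A := by
    have h := le_trans (le_iSup (fun z : orthant D =>
      (((inner ℝ z.1 u : ℝ) - t * ξ z.1 : ℝ) : EReal)) ⟨z, hz⟩) hA
    exact_mod_cast h
  have h2 : (inner ℝ z ((t' / t) • u) : ℝ) - t' * ξ z = t' / t * ((inner ℝ z u : ℝ) - t * ξ z) := by
    rw [real_inner_smul_right]
    field_simp
  have h3 : (inner ℝ z ((t' / t) • u) : ℝ) - t' * ξ z ≤ t' / t * A := by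
    rw [h2]
    exact mul_le_mul_of_nonneg_left h1 (div_nonneg ht' ht0.le)
  exact_mod_cast h3

end tconj

section cont

variable {D : ℕ} {ξ : EuclideanSpace ℝ (Fin D) → ℝ}

lemma xi_contOn (hξloc : ∀ x ∈ orthant D, ∃ (K' : ℝ≥0) (ε : ℝ), 0 < ε ∧
      LipschitzOnWith K' ξ (orthant D ∩ Metric.ball x ε)) :
    ContinuousOn ξ (orthant D) := by
  intro x hx
  obtain ⟨K', ε, hε, hlip⟩ := hξloc x hx
  have h1 : ContinuousWithinAt ξ (orthant D ∩ Metric.ball x ε) x :=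
    hlip.continuousOn x ⟨hx, Metric.mem_ball_self hε⟩
  exact (continuousWithinAt_inter (Metric.ball_mem_nhds x hε)).mp h1

lemma C_spec (hξloc : ∀ x ∈ orthant D, ∃ (K' : ℝ≥0) (ε : ℝ), 0 < ε ∧
      LipschitzOnWith K' ξ (orthant D ∩ Metric.ball x ε)) {L : ℝ≥0} {C : ℝ}
    (hC : C = sSup ((fun z => |ξ z|) '' (orthant D ∩ Metric.closedBall 0 (L : ℝ)))) :
    ∀ z ∈ orthant D, ‖z‖ ≤ (L : ℝ) → |ξ z| ≤ C := by
  have hKc : IsCompact (orthant D ∩ Metric.closedBall 0 (L : ℝ)) :=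
    (isCompact_closedBall 0 (L : ℝ)).inter_left isClosed_orthant
  have hcont : ContinuousOn (fun z => |ξ z|) (orthant D ∩ Metric.closedBall 0 (L : ℝ)) :=
    ((xi_contOn hξloc).mono Set.inter_subset_left).abs
  have hbdd : BddAbove ((fun z => |ξ z|) '' (orthant D ∩ Metric.closedBall 0 (L : ℝ))) :=
    (hKc.image_of_continuousOn hcont).bddAbove
  intro z hz hzn
  rw [hC]
  exact le_csSup hbdd ⟨z, ⟨hz, by simpa [Metric.mem_closedBall, dist_zero_right] using hzn⟩, rfl⟩

end cont


section hopf

variable {D : ℕ} {ξ χ : EuclideanSpace ℝ (Fin D) → ℝ}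
  (hξmono : ∀ x ∈ orthant D, ∀ y ∈ orthant D, ξ x ≤ ξ (x + y)) (hξ0 : ξ 0 = 0)
  {L : ℝ≥0} {C : ℝ} (hCb : ∀ z ∈ orthant D, ‖z‖ ≤ (L : ℝ) → |ξ z| ≤ C)
  (hχmono : ∀ x ∈ orthant D, ∀ y ∈ orthant D, χ x ≤ χ (x + y))
  (hχlip : LipschitzOnWith L χ (orthant D))

include hχlip in
lemma chiLip {a b : EuclideanSpace ℝ (Fin D)} (ha : a ∈ orthant D) (hb : b ∈ orthant D) :
    χ a ≤ χ b + (L : ℝ) * ‖a - b‖ := by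
  have h := hχlip.dist_le_mul a ha b hb
  rw [Real.dist_eq, dist_eq_norm] at h
  have h2 := le_abs_self (χ a - χ b)
  linarith [h2.trans h]

include hχmono in
lemma chi_pPart {y x : EuclideanSpace ℝ (Fin D)} (hy : y ∈ orthant D) :
    χ y ≤ χ (pPart (y - x) + x) := by
  have h := hχmono y hy (pPart (x - y)) (pPart_mem _)
  rwa [pPart_add_eq] at h

include hξmono hξ0 hCb hχmono hχlip in
lemma hopfLax_le_bound {t : ℝ} (ht : 0 ≤ t) {x : EuclideanSpace ℝ (Fin D)}
    (hx : x ∈ orthant D) :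
    hopfLax D t ξ χ x ≤ ((χ x + t * C : ℝ) : EReal) := by
  apply iSup_le
  rintro ⟨y, hy⟩
  set u := pPart (y - x) with hudef
  have hu : u ∈ orthant D := pPart_mem _
  have h1 : (((L : ℝ) * ‖u‖ - t * C : ℝ) : EReal) ≤ tConj D t ξ (y - x) :=
    le_trans (tConj_lower hξmono hξ0 hCb ht hu) (tConj_pPart_le hξmono ht (y - x))
  have h2 : χ y ≤ χ x + (L : ℝ) * ‖u‖ := by
    have ha : χ y ≤ χ (u + x) := chi_pPart hχmono hy
    have hb2 : χ (u + x) ≤ χ x + (L : ℝ) * ‖u‖ := by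
      have h := chiLip hχlip (add_mem hu hx) hx
      rwa [add_sub_cancel_right] at h
    linarith
  have h3 := helper2 (χ y) (χ x + (L : ℝ) * ‖u‖) ((L : ℝ) * ‖u‖ - t * C)
    (tConj D t ξ (y - x)) h2 h1
  convert h3 using 2
  ring

include hξmono hξ0 in
lemma hopfLax_ge_bound {t : ℝ} (ht : 0 ≤ t) {x : EuclideanSpace ℝ (Fin D)}
    (hx : x ∈ orthant D) : ((χ x : ℝ) : EReal) ≤ hopfLax D t ξ χ x := by
  have h := le_iSup (fun y : orthant D => ((χ y.1 : EReal) - tConj D t ξ (y.1 - x))) ⟨x, hx⟩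
  simp only [sub_self, tConj_zero_eq hξmono hξ0 ht] at h
  calc ((χ x : ℝ) : EReal) = (χ x : EReal) - 0 := by simp [sub_eq_add_neg]
    _ ≤ hopfLax D t ξ χ x := h

include hξmono hξ0 hCb hχmono hχlip in
lemma hopfLax_finite {t : ℝ} (ht : 0 ≤ t) {x : EuclideanSpace ℝ (Fin D)}
    (hx : x ∈ orthant D) :
    ∃ a : ℝ, hopfLax D t ξ χ x = (a : EReal) := by
  have hle := hopfLax_le_bound hξmono hξ0 hCb hχmono hχlip ht hx
  have hge := hopfLax_ge_bound (χ := χ) hξmono hξ0 ht hx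
  have hnt : hopfLax D t ξ χ x ≠ ⊤ := ne_top_of_le_ne_top (EReal.coe_ne_top _) hle
  have hnb : hopfLax D t ξ χ x ≠ ⊥ := ne_bot_of_le_ne_bot (EReal.coe_ne_bot _) hge
  exact ⟨(hopfLax D t ξ χ x).toReal, (EReal.coe_toReal hnt hnb).symm⟩

include hξmono hχmono hχlip in
lemma hopfLax_lip_x {t : ℝ} (ht : 0 ≤ t) {x x' : EuclideanSpace ℝ (Fin D)}
    (hx : x ∈ orthant D) (hx' : x' ∈ orthant D) (b : ℝ)
    (hb : hopfLax D t ξ χ x' = (b : EReal)) :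
    hopfLax D t ξ χ x ≤ ((b + (L : ℝ) * ‖x - x'‖ : ℝ) : EReal) := by
  apply iSup_le
  rintro ⟨y, hy⟩
  set p := pPart (y - x) with hpdef
  have hp : p ∈ orthant D := pPart_mem _
  have hy' : p + x' ∈ orthant D := add_mem hp hx'
  apply helper1 (χ y) (χ (p + x')) ((L : ℝ) * ‖x - x'‖) b
    (tConj D t ξ (y - x)) (tConj D t ξ (p + x' - x'))
  · have ha : χ y ≤ χ (p + x) := chi_pPart hχmono hy
    have hb2 : χ (p + x) ≤ χ (p + x') + (L : ℝ) * ‖p + x - (p + x')‖ :=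
      chiLip hχlip (add_mem hp hx) hy'
    rw [add_sub_add_left_eq_sub] at hb2
    linarith
  · rw [add_sub_cancel_right]
    exact tConj_pPart_le hξmono ht (y - x)
  · rw [← hb]
    exact le_iSup (fun y : orthant D => ((χ y.1 : EReal) - tConj D t ξ (y.1 - x'))) ⟨p + x', hy'⟩

include hξmono hξ0 in
lemma hopfLax_mono_t {t t' : ℝ} (ht' : 0 ≤ t') (htt : t' ≤ t)
    {x : EuclideanSpace ℝ (Fin D)} :
    hopfLax D t' ξ χ x ≤ hopfLax D t ξ χ x := by
  apply iSup_mono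
  rintro ⟨y, hy⟩
  exact EReal.sub_le_sub (le_refl _) (tConj_anti_t hξmono hξ0 ht' htt)

include hξmono hξ0 hCb hχmono hχlip in
lemma hopfLax_lip_t {t t' : ℝ} (ht' : 0 ≤ t') (htt : t' ≤ t)
    {x : EuclideanSpace ℝ (Fin D)} (hx : x ∈ orthant D) (b : ℝ)
    (hb : hopfLax D t' ξ χ x = (b : EReal)) (hC0 : 0 ≤ C) :
    hopfLax D t ξ χ x ≤ ((b + C * (t - t') : ℝ) : EReal) := by
  rcases eq_or_lt_of_le htt with rfl | hlt
  · rw [hb, sub_self, mul_zero, add_zero]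
  · have ht0 : 0 < t := lt_of_le_of_lt ht' hlt
    apply iSup_le
    rintro ⟨y, hy⟩
    by_cases htop : tConj D t ξ (y - x) = ⊤
    · rw [htop]
      simp [sub_eq_add_neg]
    · set u := pPart (y - x) with hudef
      have hu : u ∈ orthant D := pPart_mem _
      have hle1 : tConj D t ξ u ≤ tConj D t ξ (y - x) := tConj_pPart_le hξmono ht0.le (y - x)
      have hnt : tConj D t ξ u ≠ ⊤ := ne_top_of_le_ne_top htop hle1
      have hge0 : 0 ≤ tConj D t ξ u := tConj_nonneg hξ0 u
      have hnb : tConj D t ξ u ≠ ⊥ := by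
        intro hbot
        rw [hbot] at hge0
        simp at hge0
      set A := (tConj D t ξ u).toReal with hAdef
      have hAe : tConj D t ξ u = (A : EReal) := (EReal.coe_toReal hnt hnb).symm
      have hA0 : 0 ≤ A := by
        rw [hAe] at hge0
        exact_mod_cast hge0
      have hAlow : (L : ℝ) * ‖u‖ - t * C ≤ A := by
        have h := tConj_lower hξmono hξ0 hCb ht0.le hu
        rw [hAe] at h
        exact_mod_cast h
      set c := t' / t with hcdef
      have hc0 : 0 ≤ c := div_nonneg ht' ht0.le
      have hc1 : c ≤ 1 := (div_le_one ht0).mpr htt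
      set u' := c • u with hu'def
      have hu' : u' ∈ orthant D := smul_mem hc0 hu
      have hscale : tConj D t' ξ u' ≤ ((c * A : ℝ) : EReal) :=
        tConj_scale ht' ht0 u A hAe.le
      have hchain1 : χ y ≤ χ (u + x) := chi_pPart hχmono hy
      have hchain2 : χ (u + x) ≤ χ (u' + x) + (L : ℝ) * ‖u - u'‖ := by
        have h := chiLip hχlip (add_mem hu hx) (add_mem hu' hx)
        rwa [add_sub_add_right_eq_sub] at h
      have hnorm : ‖u - u'‖ = (1 - c) * ‖u‖ := by
        have : u - u' = (1 - c) • u := by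
          rw [sub_smul, one_smul]
        rw [this, norm_smul, Real.norm_eq_abs, abs_of_nonneg (by linarith)]
      have hterm : ((χ (u' + x) : ℝ) : EReal) - tConj D t' ξ u' ≤ (b : EReal) := by
        rw [← hb]
        have h := le_iSup (fun y : orthant D =>
          ((χ y.1 : EReal) - tConj D t' ξ (y.1 - x))) ⟨u' + x, add_mem hu' hx⟩
        simp only [add_sub_cancel_right] at h
        exact h
      have hreal : χ (u' + x) - c * A ≤ b := by
        have h : ((χ (u' + x) - c * A : ℝ) : EReal) ≤ (b : EReal) := by
          rw [EReal.coe_sub]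
          exact le_trans (EReal.sub_le_sub (le_refl _) hscale) hterm
        exact_mod_cast h
      have hfinal : χ y - A ≤ b + C * (t - t') := by
        have key : (1 - c) * ((L : ℝ) * ‖u‖ - A) ≤ (1 - c) * (t * C) :=
          mul_le_mul_of_nonneg_left (by linarith) (by linarith)
        have hct : (1 - c) * (t * C) = C * (t - t') := by
          rw [hcdef]
          field_simp
        have hexp : b + c * A + (L : ℝ) * ((1 - c) * ‖u‖) - A
            = b + (1 - c) * ((L : ℝ) * ‖u‖ - A) := by ring
        have h1 : χ y ≤ χ (u' + x) + (L : ℝ) * ((1 - c) * ‖u‖) := by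
          rw [← hnorm]
          linarith
        linarith
      have hAle : (A : EReal) ≤ tConj D t ξ (y - x) := hAe ▸ hle1
      have h5 := helper2 (χ y) (χ y) A (tConj D t ξ (y - x)) (le_refl _) hAle
      refine le_trans h5 ?_
      exact_mod_cast hfinal

end hopf
end HLaux

/-- for `ξ` locally Lipschitz, convex, `ℝ_+^D`-increasing with `ξ(0) = 0` and
`χ` `ℝ_+^D`-increasing and `L`-Lipschitz, with `C = sup{|ξ(z)| : z ∈ ℝ_+^D, |z| ≤ L}`, the
Hopf–Lax values are (finite and) satisfy
`|S_tχ(x) − S_{t'}χ(x')| ≤ C·|t−t'| + L·|x−x'|`. -/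
theorem hopfLax_lipschitz (D : ℕ) (hD : 1 ≤ D)
    (ξ : EuclideanSpace ℝ (Fin D) → ℝ)
    (hξloc : ∀ x ∈ orthant D, ∃ (K' : ℝ≥0) (ε : ℝ), 0 < ε ∧
      LipschitzOnWith K' ξ (orthant D ∩ Metric.ball x ε))
    (hξconv : ConvexOn ℝ (orthant D) ξ)
    (hξmono : ∀ x ∈ orthant D, ∀ y ∈ orthant D, ξ x ≤ ξ (x + y))
    (hξ0 : ξ 0 = 0)
    (χ : EuclideanSpace ℝ (Fin D) → ℝ) (L : ℝ≥0)
    (hχmono : ∀ x ∈ orthant D, ∀ y ∈ orthant D, χ x ≤ χ (x + y))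
    (hχlip : LipschitzOnWith L χ (orthant D))
    (C : ℝ)
    (hC : C = sSup ((fun z => |ξ z|) '' (orthant D ∩ Metric.closedBall 0 (L : ℝ))))
    (t t' : ℝ) (ht : 0 ≤ t) (ht' : 0 ≤ t')
    (x x' : EuclideanSpace ℝ (Fin D)) (hx : x ∈ orthant D) (hx' : x' ∈ orthant D) :
    ∃ a b : ℝ, hopfLax D t ξ χ x = (a : EReal) ∧ hopfLax D t' ξ χ x' = (b : EReal) ∧
      |a - b| ≤ C * |t - t'| + (L : ℝ) * ‖x - x'‖ := by
  have hCb := HLaux.C_spec hξloc hC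
  have hC0 : 0 ≤ C := le_trans (abs_nonneg _) (hCb 0 HLaux.zero_mem (by simp))
  obtain ⟨a, ha⟩ := HLaux.hopfLax_finite hξmono hξ0 hCb hχmono hχlip ht hx
  obtain ⟨b, hb⟩ := HLaux.hopfLax_finite hξmono hξ0 hCb hχmono hχlip ht' hx'
  obtain ⟨m, hm⟩ := HLaux.hopfLax_finite hξmono hξ0 hCb hχmono hχlip ht' hx
  obtain ⟨m', hm'⟩ := HLaux.hopfLax_finite hξmono hξ0 hCb hχmono hχlip ht hx'
  refine ⟨a, b, ha, hb, ?_⟩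
  have hstep_t : ∀ s s' : ℝ, 0 ≤ s → 0 ≤ s' →
      ∀ xx : EuclideanSpace ℝ (Fin D), xx ∈ orthant D → ∀ p q : ℝ,
      hopfLax D s ξ χ xx = (p : EReal) → hopfLax D s' ξ χ xx = (q : EReal) →
      p ≤ q + C * |s - s'| := by
    intro s s' hs hs' xx hxx p q hp hq
    rcases le_total s s' with h | h
    · have h1 : hopfLax D s ξ χ xx ≤ hopfLax D s' ξ χ xx :=
        HLaux.hopfLax_mono_t hξmono hξ0 hs h
      rw [hp, hq] at h1
      have h2 : p ≤ q := by exact_mod_cast h1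
      have h3 : 0 ≤ C * |s - s'| := mul_nonneg hC0 (abs_nonneg _)
      linarith
    · have h1 := HLaux.hopfLax_lip_t hξmono hξ0 hCb hχmono hχlip hs' h hxx q hq hC0
      rw [hp] at h1
      have h2 : p ≤ q + C * (s - s') := by exact_mod_cast h1
      rwa [abs_of_nonneg (sub_nonneg.mpr h)]
  have hstep_x : ∀ s : ℝ, 0 ≤ s →
      ∀ xx xx' : EuclideanSpace ℝ (Fin D), xx ∈ orthant D → xx' ∈ orthant D → ∀ p q : ℝ,
      hopfLax D s ξ χ xx = (p : EReal) → hopfLax D s ξ χ xx' = (q : EReal) →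
      p ≤ q + (L : ℝ) * ‖xx - xx'‖ := by
    intro s hs xx xx' hxx hxx' p q hp hq
    have h1 := HLaux.hopfLax_lip_x hξmono hχmono hχlip hs hxx hxx' q hq
    rw [hp] at h1
    exact_mod_cast h1
  have h1 : a ≤ m + C * |t - t'| := hstep_t t t' ht ht' x hx a m ha hm
  have h2 : m ≤ b + (L : ℝ) * ‖x - x'‖ := hstep_x t' ht' x x' hx hx' m b hm hb
  have h3 : b ≤ m' + C * |t' - t| := hstep_t t' t ht' ht x' hx' b m' hb hm'
  have h4 : m' ≤ a + (L : ℝ) * ‖x' - x‖ := hstep_x t ht x' x hx' hx m' a hm' ha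
  rw [abs_sub_comm] at h3
  rw [norm_sub_rev] at h4
  rw [abs_sub_le_iff]
  constructor <;> linarith
end

section
/- Let D ≥ 1 be an integer and let ξ : ℝ^D → ℝ be given by a power series ξ(x) = Σ_α c_α x^α over multi-indices α, with all coefficients c_α ≥ 0, absolutely convergent on ℝ^D, with ξ(0) = 0, and assume ξ is convex on ℝ_+^D. Let χ ∈ 𝔛 and t ≥ 0. Then the function S_tχ : ℝ_+^D → ℝ is ℝ_+^D-convex. -/
open MeasureTheory
open scoped NNReal BigOperators

/-- helper: remove epsilon in EReal inequalities -/
theorem ereal_le_of_forall_add {a b : EReal} (h : ∀ ε : ℝ, 0 < ε → a ≤ b + (ε : EReal)) :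
    a ≤ b := by
  induction b with
  | bot => simpa using h 1 one_pos
  | top => exact le_top
  | coe b =>
    induction a with
    | bot => exact bot_le
    | top => exact absurd (h 1 one_pos) (by norm_cast; exact (EReal.coe_lt_top _).not_ge)
    | coe a =>
      norm_cast
      by_contra hab
      push_neg at hab
      have := h ((a - b)/2) (by linarith)
      rw [← EReal.coe_add, EReal.coe_le_coe_iff] at this
      linarith

/-- helper: AM-GM-type rearrangement inequality -/
theorem amgm_rearrange {A B M m : ℝ} (hA : 0 ≤ A) (hB : 0 ≤ B) (hm : 0 ≤ m)
    (hAM : A ≤ M) (hBM : B ≤ M) (hp : m * M = A * B) : A + B ≤ M + m := by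
  rcases eq_or_lt_of_le (hA.trans hAM) with hM | hM
  · have hA0 : A = 0 := le_antisymm (hAM.trans hM.ge) hA
    have hB0 : B = 0 := le_antisymm (hBM.trans hM.ge) hB
    simp [hA0, hB0]
    linarith
  · nlinarith [mul_nonneg (sub_nonneg.2 hAM) (sub_nonneg.2 hBM)]

/-- helper: EReal difference comparison -/
theorem ereal_sub_sub_le {A1 A2 B1 B2 : ℝ} {s1 s2 σ1 σ2 : EReal}
    (h0σ1 : 0 ≤ σ1) (h0σ2 : 0 ≤ σ2)
    (hAB : A1 + A2 ≤ B1 + B2) (hσ : σ1 + σ2 ≤ s1 + s2) :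
    ((A1 : EReal) - s1) + ((A2 : EReal) - s2) ≤ ((B1 : EReal) - σ1) + ((B2 : EReal) - σ2) := by
  rcases eq_or_ne s1 ⊤ with rfl | hs1
  · have : (A1:EReal) - ⊤ = ⊥ := by rw [sub_eq_add_neg]; simp
    rw [this, EReal.bot_add]; exact bot_le
  rcases eq_or_ne s2 ⊤ with rfl | hs2
  · have : (A2:EReal) - ⊤ = ⊥ := by rw [sub_eq_add_neg]; simp
    rw [this, EReal.add_bot]; exact bot_le
  rcases eq_or_ne s1 ⊥ with rfl | hs1'
  · -- s1 = ⊥ : σ1 + σ2 ≤ ⊥ + s2 = ⊥ impossible unless... ⊥ + s2 = ⊥, so σ1 + σ2 = ⊥, impossible since σ ≥ 0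
    rw [EReal.bot_add] at hσ
    have : (0:EReal) ≤ σ1 + σ2 := add_nonneg h0σ1 h0σ2
    exact absurd (this.trans hσ) (by simp)
  rcases eq_or_ne s2 ⊥ with rfl | hs2'
  · rw [EReal.add_bot] at hσ
    have : (0:EReal) ≤ σ1 + σ2 := add_nonneg h0σ1 h0σ2
    exact absurd (this.trans hσ) (by simp)
  lift s1 to ℝ using ⟨hs1, hs1'⟩
  lift s2 to ℝ using ⟨hs2, hs2'⟩
  have hσ1t : σ1 ≠ ⊤ := by
    intro h; rw [h] at hσ
    have : σ2 ≠ ⊥ := ne_of_gt (lt_of_lt_of_le (bot_lt_iff_ne_bot.2 (by simp) : (⊥:EReal) < 0) h0σ2)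
    rw [EReal.top_add_of_ne_bot this] at hσ
    exact absurd hσ (by norm_cast)
  have hσ2t : σ2 ≠ ⊤ := by
    intro h; rw [h] at hσ
    have : σ1 ≠ ⊥ := ne_of_gt (lt_of_lt_of_le (bot_lt_iff_ne_bot.2 (by simp) : (⊥:EReal) < 0) h0σ1)
    rw [EReal.add_top_of_ne_bot this] at hσ
    exact absurd hσ (by norm_cast)
  lift σ1 to ℝ using ⟨hσ1t, ne_of_gt (lt_of_lt_of_le (bot_lt_iff_ne_bot.2 (by simp) : (⊥:EReal) < 0) h0σ1)⟩
  lift σ2 to ℝ using ⟨hσ2t, ne_of_gt (lt_of_lt_of_le (bot_lt_iff_ne_bot.2 (by simp) : (⊥:EReal) < 0) h0σ2)⟩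
  rw [← EReal.coe_add, ← EReal.coe_add, EReal.coe_le_coe_iff] at hσ
  norm_cast
  linarith

/-- helper: chord slope inequality for 1-D convex functions -/
theorem chord_ineq (h : ℝ → ℝ) (hcv : ConvexOn ℝ (Set.Ici 0) h)
    (hmono : MonotoneOn h (Set.Ici 0)) (A ε s : ℝ) (hA : 0 ≤ A) (hε : 0 < ε) (hs : 0 ≤ s) :
    (h (A+ε) - h A)/ε * s - h s ≤ (h (A+ε) - h A)/ε * A - h A + (h (A+ε) - h A)/ε * ε := by
  set p := (h (A+ε) - h A)/ε with hpdef
  have hAε : A < A + ε := by linarith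
  have hp : 0 ≤ p := by
    apply div_nonneg _ hε.le
    have := hmono (Set.mem_Ici.2 hA) (Set.mem_Ici.2 (by linarith : (0:ℝ) ≤ A + ε)) hAε.le
    linarith
  have hpe : 0 ≤ p * ε := mul_nonneg hp hε.le
  rcases lt_or_ge s A with hsA | hsA
  · -- s < A
    have hsec := hcv.secant_mono (Set.mem_Ici.2 hA) (Set.mem_Ici.2 hs)
      (Set.mem_Ici.2 (by linarith : (0:ℝ) ≤ A + ε)) (ne_of_lt hsA) (ne_of_gt hAε) (by linarith)
    rw [add_sub_cancel_left] at hsec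
    rw [div_le_iff_of_neg (by linarith : s - A < 0)] at hsec
    -- hsec : p * (s - A) ≤ h s - h A
    nlinarith
  · rcases le_or_gt s (A + ε) with hsB | hsB
    · -- A ≤ s ≤ A + ε
      have h1 : h A ≤ h s := hmono (Set.mem_Ici.2 hA) (Set.mem_Ici.2 hs) hsA
      have h2 : p * s ≤ p * (A + ε) := mul_le_mul_of_nonneg_left hsB hp
      nlinarith
    · -- s > A + ε
      have hsec := hcv.secant_mono (Set.mem_Ici.2 hA)
        (Set.mem_Ici.2 (by linarith : (0:ℝ) ≤ A + ε)) (Set.mem_Ici.2 hs)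
        (ne_of_gt hAε) (by intro hc; rw [hc] at hsB; linarith) (by linarith)
      rw [add_sub_cancel_left] at hsec
      rw [← hpdef, le_div_iff₀ (by linarith : 0 < s - A)] at hsec
      nlinarith

theorem exists_subgradient {D : ℕ} (G : EuclideanSpace ℝ (Fin D) → ℝ)
    (hGconv : ConvexOn ℝ Set.univ G) (r : EuclideanSpace ℝ (Fin D)) :
    ∃ w : EuclideanSpace ℝ (Fin D), ∀ z, G r + (inner ℝ w (z - r) : ℝ) ≤ G z := by
  have hGcont : Continuous G := by
    rw [← continuousOn_univ]
    exact hGconv.continuousOn isOpen_univ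
  set S : Set (EuclideanSpace ℝ (Fin D) × ℝ) := {q | G q.1 < q.2} with hS
  have hSopen : IsOpen S := isOpen_lt (hGcont.comp continuous_fst) continuous_snd
  have hSconv : Convex ℝ S := by
    rintro ⟨z1, s1⟩ h1 ⟨z2, s2⟩ h2 a b ha hb hab
    simp only [hS, Set.mem_setOf_eq] at h1 h2 ⊢
    have := hGconv.2 (Set.mem_univ z1) (Set.mem_univ z2) ha hb hab
    refine this.trans_lt ?_
    rcases eq_or_lt_of_le ha with rfl | ha'
    · simpa using mul_lt_mul_of_pos_left h2 (by linarith)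
    · have h1' : a * G z1 < a * s1 := mul_lt_mul_of_pos_left h1 ha'
      have h2' : b * G z2 ≤ b * s2 := mul_le_mul_of_nonneg_left h2.le hb
      simpa [Prod.smul_mk, smul_eq_mul] using add_lt_add_of_lt_of_le h1' h2'
  have hrnot : (r, G r) ∉ S := by simp [hS]
  obtain ⟨f, hf⟩ := geometric_hahn_banach_point_open hSconv hSopen hrnot
  -- f (r, G r) < f b for all b ∈ S
  set κ : ℝ := f (0, 1) with hκ
  have hdecomp : ∀ z s, f (z, s) = f (z, 0) + s * κ := by
    intro z s
    have : (z, s) = (z, (0:ℝ)) + ((0:EuclideanSpace ℝ (Fin D)), s) := by simp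
    rw [this, _root_.map_add]
    congr 1
    have : ((0:EuclideanSpace ℝ (Fin D)), s) = s • ((0:EuclideanSpace ℝ (Fin D)), (1:ℝ)) := by
      simp
    rw [this, _root_.map_smul, smul_eq_mul, hκ]
  have hκpos : 0 < κ := by
    have h1 : (r, G r + 1) ∈ S := by simp [hS]
    have := hf _ h1
    rw [hdecomp r (G r), hdecomp r (G r + 1)] at this
    nlinarith
  have key : ∀ z, f (r, 0) + G r * κ ≤ f (z, 0) + G z * κ := by
    intro z
    have hε : ∀ ε : ℝ, 0 < ε → f (r, 0) + G r * κ ≤ f (z, 0) + (G z + ε) * κ := by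
      intro ε hε
      have hmem : (z, G z + ε) ∈ S := by simp [hS, hε]
      have := hf _ hmem
      rw [hdecomp r (G r), hdecomp z (G z + ε)] at this
      linarith
    by_contra hcon
    push_neg at hcon
    have := hε ((f (r,0) + G r * κ - (f (z,0) + G z * κ)) / (2 * κ)) (div_pos (by linarith) (by linarith))
    rw [add_mul] at this
    have h2 : (f (r,0) + G r * κ - (f (z,0) + G z * κ)) / (2*κ) * κ
        = (f (r,0) + G r * κ - (f (z,0) + G z * κ)) / 2 := by
      field_simp
    rw [h2] at this; linarith
  set w : EuclideanSpace ℝ (Fin D) := WithLp.toLp 2 (fun d => -(f (EuclideanSpace.single d 1, 0)) / κ) with hw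
  have hinner : ∀ u : EuclideanSpace ℝ (Fin D), (inner ℝ w u : ℝ) = -(f (u, 0)) / κ := by
    intro u
    have hu : ∑ d, u d • EuclideanSpace.single d (1:ℝ) = u := by
      have := (EuclideanSpace.basisFun (Fin D) ℝ).sum_repr u
      simpa [EuclideanSpace.basisFun_apply, EuclideanSpace.basisFun_repr] using this
    have hfu : f (u, 0) = ∑ d, u d * f (EuclideanSpace.single d (1:ℝ), 0) := by
      conv_lhs => rw [← hu]
      have hpair : ((∑ d, u d • EuclideanSpace.single d (1:ℝ)), (0:ℝ))
          = ∑ d, u d • (EuclideanSpace.single d (1:ℝ), (0:ℝ)) := by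
        induction (Finset.univ : Finset (Fin D)) using Finset.induction with
        | empty => simp
        | insert _ _ hni ih =>
          rw [Finset.sum_insert hni, Finset.sum_insert hni, ← ih, Prod.smul_mk, Prod.mk_add_mk]
          simp
      rw [hpair, _root_.map_sum]
      exact Finset.sum_congr rfl fun d _ => by rw [_root_.map_smul, smul_eq_mul]
    rw [PiLp.inner_apply, hfu]
    rw [← Finset.sum_neg_distrib, Finset.sum_div]
    refine Finset.sum_congr rfl fun d _ => ?_
    simp only [hw, RCLike.inner_apply, conj_trivial]
    ring
  refine ⟨w, fun z => ?_⟩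
  rw [hinner (z - r)]
  have hlin : f (z - r, 0) = f (z, 0) - f (r, 0) := by
    have : ((z - r : EuclideanSpace ℝ (Fin D)), (0:ℝ)) = (z, 0) - (r, 0) := by simp
    rw [this, _root_.map_sub]
  rw [hlin]
  have hk := key z
  have h2 : -(f (z, 0) - f (r, 0)) / κ ≤ G z - G r := by
    rw [div_le_iff₀ hκpos]
    nlinarith
  linarith

theorem xi_mono {D : ℕ} (c : (Fin D → ℕ) → ℝ) (hc : ∀ α, 0 ≤ c α)
    (ξ : EuclideanSpace ℝ (Fin D) → ℝ)
    (habs : ∀ x : EuclideanSpace ℝ (Fin D),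
      Summable (fun α : Fin D → ℕ => |c α * ∏ i, x i ^ α i|))
    (hξ : ∀ x : EuclideanSpace ℝ (Fin D), ξ x = ∑' α : Fin D → ℕ, c α * ∏ i, x i ^ α i)
    (u v : EuclideanSpace ℝ (Fin D)) (hu : ∀ i, 0 ≤ u i) (huv : ∀ i, u i ≤ v i) :
    ξ u ≤ ξ v := by
  rw [hξ u, hξ v]
  refine Summable.tsum_le_tsum (fun α => ?_) ((habs u).of_abs) ((habs v).of_abs)
  refine mul_le_mul_of_nonneg_left ?_ (hc α)
  exact Finset.prod_le_prod (fun i _ => pow_nonneg (hu i) _)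
    (fun i _ => pow_le_pow_left₀ (hu i) (huv i) _)

theorem xi_super {D : ℕ} (c : (Fin D → ℕ) → ℝ) (hc : ∀ α, 0 ≤ c α)
    (ξ : EuclideanSpace ℝ (Fin D) → ℝ)
    (habs : ∀ x : EuclideanSpace ℝ (Fin D),
      Summable (fun α : Fin D → ℕ => |c α * ∏ i, x i ^ α i|))
    (hξ : ∀ x : EuclideanSpace ℝ (Fin D), ξ x = ∑' α : Fin D → ℕ, c α * ∏ i, x i ^ α i)
    (u v : EuclideanSpace ℝ (Fin D)) (hu : ∀ i, 0 ≤ u i) (hv : ∀ i, 0 ≤ v i) :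
    ξ u + ξ v ≤ ξ (WithLp.toLp 2 (fun d => max (u d) (v d))) + ξ (WithLp.toLp 2 (fun d => min (u d) (v d))) := by
  rw [hξ u, hξ v, hξ _, hξ _]
  rw [← Summable.tsum_add ((habs u).of_abs) ((habs v).of_abs),
    ← Summable.tsum_add ((habs _).of_abs) ((habs _).of_abs)]
  refine Summable.tsum_le_tsum (fun α => ?_)
    (Summable.add ((habs u).of_abs) ((habs v).of_abs))
    (Summable.add ((habs _).of_abs) ((habs _).of_abs))
  rw [← mul_add, ← mul_add]
  refine mul_le_mul_of_nonneg_left ?_ (hc α)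
  have hA : (0:ℝ) ≤ ∏ i, u i ^ α i := Finset.prod_nonneg fun i _ => pow_nonneg (hu i) _
  have hB : (0:ℝ) ≤ ∏ i, v i ^ α i := Finset.prod_nonneg fun i _ => pow_nonneg (hv i) _
  have hm : (0:ℝ) ≤ ∏ i, (min (u i) (v i) : ℝ) ^ α i :=
    Finset.prod_nonneg fun i _ => pow_nonneg (le_min (hu i) (hv i)) _
  have hAM : ∏ i, u i ^ α i ≤ ∏ i, (max (u i) (v i) : ℝ) ^ α i :=
    Finset.prod_le_prod (fun i _ => pow_nonneg (hu i) _)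
      (fun i _ => pow_le_pow_left₀ (hu i) (le_max_left _ _) _)
  have hBM : ∏ i, v i ^ α i ≤ ∏ i, (max (u i) (v i) : ℝ) ^ α i :=
    Finset.prod_le_prod (fun i _ => pow_nonneg (hv i) _)
      (fun i _ => pow_le_pow_left₀ (hv i) (le_max_right _ _) _)
  have hp : (∏ i, (min (u i) (v i) : ℝ) ^ α i) * (∏ i, (max (u i) (v i) : ℝ) ^ α i)
      = (∏ i, u i ^ α i) * (∏ i, v i ^ α i) := by
    rw [← Finset.prod_mul_distrib, ← Finset.prod_mul_distrib]
    refine Finset.prod_congr rfl fun i _ => ?_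
    rw [← mul_pow, ← mul_pow, min_mul_max]
  exact amgm_rearrange hA hB hm hAM hBM hp
set_option maxHeartbeats 1000000

section MainProof
variable {D : ℕ}

theorem main_aux (c : (Fin D → ℕ) → ℝ) (hc : ∀ α, 0 ≤ c α)
    (ξ : EuclideanSpace ℝ (Fin D) → ℝ)
    (habs : ∀ x : EuclideanSpace ℝ (Fin D),
      Summable (fun α : Fin D → ℕ => |c α * ∏ i, x i ^ α i|))
    (hξ : ∀ x : EuclideanSpace ℝ (Fin D),
      ξ x = ∑' α : Fin D → ℕ, c α * ∏ i, x i ^ α i)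
    (hξ0 : ξ 0 = 0)
    (hconv : ConvexOn ℝ (orthant D) ξ)
    (lam : Fin D → ℝ) (hlam : ∀ d, lam d ∈ Set.Ioo (0 : ℝ) 1) (hlamsum : ∑ d, lam d = 1)
    (χd : Fin D → ℝ → ℝ)
    (hχd0 : ∀ d, χd d 0 = 0)
    (hχdconv : ∀ d, ConvexOn ℝ (Set.Ici (0 : ℝ)) (χd d))
    (hχdlip : ∀ d, LipschitzOnWith 1 (χd d) (Set.Ici (0 : ℝ)))
    (hχdmono : ∀ d, MonotoneOn (χd d) (Set.Ici (0 : ℝ)))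
    (χ : EuclideanSpace ℝ (Fin D) → ℝ)
    (hχ : ∀ x : EuclideanSpace ℝ (Fin D), χ x = ∑ d, lam d * χd d (x d))
    (t : ℝ) (ht : 0 ≤ t)
    (x : EuclideanSpace ℝ (Fin D)) (hx : x ∈ orthant D)
    (y : EuclideanSpace ℝ (Fin D)) (hy : y ∈ orthant D)
    (z : EuclideanSpace ℝ (Fin D)) (hz : z ∈ orthant D) :
      hopfLax D t ξ χ (x + y) + hopfLax D t ξ χ (x + z) ≤
        hopfLax D t ξ χ (x + y + z) + hopfLax D t ξ χ x := by
  classical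
  have hx' : ∀ d, 0 ≤ x d := hx
  have hy' : ∀ d, 0 ≤ y d := hy
  have hz' : ∀ d, 0 ≤ z d := hz
  have hlam0 : ∀ d, 0 < lam d := fun d => (hlam d).1
  -- inner ℝ product expansion
  have hinner : ∀ u v : EuclideanSpace ℝ (Fin D), (inner ℝ u v : ℝ) = ∑ d, u d * v d := by
    intro u v; simp [PiLp.inner_apply, RCLike.inner_apply, mul_comm]
  have hχ0 : χ 0 = 0 := by
    rw [hχ]
    refine Finset.sum_eq_zero fun d _ => ?_
    show lam d * χd d ((0 : EuclideanSpace ℝ (Fin D)) d) = 0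
    rw [show ((0 : EuclideanSpace ℝ (Fin D)) d) = (0:ℝ) from rfl, hχd0]; ring
  -- the monotone conjugate facts
  have hf_ge : ∀ (w r : EuclideanSpace ℝ (Fin D)), r ∈ orthant D →
      (((inner ℝ r w : ℝ) - t * ξ r : ℝ) : EReal) ≤ tConj D t ξ w := by
    intro w r hr
    exact le_iSup (fun zz : orthant D => (((inner ℝ zz.1 w : ℝ) - t * ξ zz.1 : ℝ) : EReal)) ⟨r, hr⟩
  have hf_le : ∀ (w r : EuclideanSpace ℝ (Fin D)), r ∈ orthant D →
      (∀ z' ∈ orthant D, t * ξ r + (inner ℝ w (z' - r) : ℝ) ≤ t * ξ z') →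
      tConj D t ξ w ≤ (((inner ℝ r w : ℝ) - t * ξ r : ℝ) : EReal) := by
    intro w r hr hsub
    refine iSup_le ?_
    rintro ⟨z', hz'⟩
    rw [EReal.coe_le_coe_iff]
    have h1 := hsub z' hz'
    have h2 : (inner ℝ w (z' - r) : ℝ) = (inner ℝ z' w : ℝ) - (inner ℝ r w : ℝ) := by
      rw [inner_sub_right, real_inner_comm w z', real_inner_comm w r]
    linarith
  -- subgradient existence
  have hsubgrad : ∀ r ∈ orthant D, ∃ w, w ∈ orthant D ∧
      ∀ z' ∈ orthant D, t * ξ r + (inner ℝ w (z' - r) : ℝ) ≤ t * ξ z' := by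
    intro r hr
    obtain ⟨P, hP⟩ : ∃ P : EuclideanSpace ℝ (Fin D) → EuclideanSpace ℝ (Fin D),
        ∀ u d, P u d = max (u d) 0 := ⟨fun u => WithLp.toLp 2 (fun d => max (u d) 0), fun _ _ => rfl⟩
    have hPorth : ∀ u, P u ∈ orthant D := fun u d => (hP u d) ▸ le_max_right _ _
    set G : EuclideanSpace ℝ (Fin D) → ℝ := fun u => t * ξ (P u) with hG
    have hGconv : ConvexOn ℝ Set.univ G := by
      refine ⟨convex_univ, fun u _ v _ a b ha hb hab => ?_⟩
      have hcomb : ξ (P (a • u + b • v)) ≤ ξ (a • P u + b • P v) := by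
        refine xi_mono c hc ξ habs hξ _ _ (hPorth _) (fun d => ?_)
        rw [hP]
        have h1 : (a • u + b • v) d = a * u d + b * v d := rfl
        have h2 : (a • P u + b • P v) d = a * max (u d) 0 + b * max (v d) 0 := by
          show a * P u d + b * P v d = _
          rw [hP, hP]
        rw [h1, h2]
        refine max_le (add_le_add ?_ ?_)
          (add_nonneg (mul_nonneg ha (le_max_right _ _)) (mul_nonneg hb (le_max_right _ _)))
        · exact mul_le_mul_of_nonneg_left (le_max_left _ _) ha
        · exact mul_le_mul_of_nonneg_left (le_max_left _ _) hb
      have hcv := hconv.2 (hPorth u) (hPorth v) ha hb hab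
      simp only [smul_eq_mul] at hcv
      have : G (a • u + b • v) ≤ t * (a * ξ (P u) + b * ξ (P v)) := by
        rw [hG]
        exact mul_le_mul_of_nonneg_left (hcomb.trans hcv) ht
      calc G (a • u + b • v) ≤ t * (a * ξ (P u) + b * ξ (P v)) := this
        _ = a • G u + b • G v := by simp only [hG, smul_eq_mul]; ring
    obtain ⟨w, hw⟩ := exists_subgradient G hGconv r
    have hPr : P r = r := by
      ext d
      rw [hP]
      exact max_eq_left (hr d)
    have hworth : w ∈ orthant D := by
      intro d
      have h1 := hw (r - EuclideanSpace.single d (1:ℝ))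
      have h2 : ((r - EuclideanSpace.single d (1:ℝ)) - r : EuclideanSpace ℝ (Fin D))
          = -(EuclideanSpace.single d 1) := by abel
      rw [h2, inner_neg_right] at h1
      have h3 : (inner ℝ w (EuclideanSpace.single d (1:ℝ)) : ℝ) = w d := by
        simp [PiLp.inner_apply, RCLike.inner_apply, EuclideanSpace.single_apply]
      rw [h3] at h1
      have h4 : G (r - EuclideanSpace.single d (1:ℝ)) ≤ G r := by
        rw [hG]
        refine mul_le_mul_of_nonneg_left ?_ ht
        refine xi_mono c hc ξ habs hξ _ _ (hPorth _) (fun i => ?_)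
        rw [hP, hP]
        refine max_le_max ?_ le_rfl
        have h5 : (r - EuclideanSpace.single d (1:ℝ)) i = r i - EuclideanSpace.single d (1:ℝ) i := rfl
        rw [h5]
        have : (0:ℝ) ≤ EuclideanSpace.single d (1:ℝ) i := by
          rw [EuclideanSpace.single_apply]
          positivity
        linarith
      linarith
    refine ⟨w, hworth, fun z' hz'' => ?_⟩
    have h1 := hw z'
    have hPz : P z' = z' := by
      ext d
      rw [hP]
      exact max_eq_left (hz'' d)
    simp only [hG] at h1
    rw [hPr, hPz] at h1
    exact h1
  -- χstar
  set χs : EuclideanSpace ℝ (Fin D) → EReal :=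
    fun p => ⨆ u : orthant D, (((inner ℝ p u.1 : ℝ) - χ u.1 : ℝ) : EReal) with hχsdef
  have hχs_ge : ∀ (p u : EuclideanSpace ℝ (Fin D)), u ∈ orthant D →
      (((inner ℝ p u : ℝ) - χ u : ℝ) : EReal) ≤ χs p := by
    intro p u hu
    rw [hχsdef]
    exact le_iSup (fun uu : orthant D => (((inner ℝ p uu.1 : ℝ) - χ uu.1 : ℝ) : EReal)) ⟨u, hu⟩
  have hχs_lt : ∀ (p : EuclideanSpace ℝ (Fin D)) (a' : EReal), a' < χs p →
      ∃ u, u ∈ orthant D ∧ a' < (((inner ℝ p u : ℝ) - χ u : ℝ) : EReal) := by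
    intro p a' h
    rw [hχsdef] at h
    obtain ⟨⟨u, hu⟩, hlt⟩ := lt_iSup_iff.1 h
    exact ⟨u, hu, hlt⟩
  have hχs_nonneg : ∀ p, (0 : EReal) ≤ χs p := by
    intro p
    have h0 : (0 : EuclideanSpace ℝ (Fin D)) ∈ orthant D := fun d => le_refl 0
    have := hχs_ge p 0 h0
    rw [inner_zero_right, hχ0] at this
    simpa using this
  -- Lemma A : hterm r v ≤ S v
  have lemA : ∀ (v : EuclideanSpace ℝ (Fin D)), v ∈ orthant D →
      ∀ (p : EuclideanSpace ℝ (Fin D)), p ∈ orthant D →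
      (((inner ℝ p v : ℝ) + t * ξ p : ℝ) : EReal) - χs p ≤ hopfLax D t ξ χ v := by
    intro v hv p hp
    obtain ⟨w, hw, hsub⟩ := hsubgrad p hp
    have hfw : tConj D t ξ w = (((inner ℝ p w : ℝ) - t * ξ p : ℝ) : EReal) :=
      le_antisymm (hf_le w p hp hsub) (hf_ge w p hp)
    have hvw : v + w ∈ orthant D := fun d => add_nonneg (hv d) (hw d)
    have hS : (χ (v+w) : EReal) - tConj D t ξ ((v+w) - v) ≤ hopfLax D t ξ χ v := by
      simp only [hopfLax]
      exact le_iSup (fun yy : orthant D => (χ yy.1 : EReal) - tConj D t ξ (yy.1 - v)) ⟨v+w, hvw⟩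
    rw [add_sub_cancel_left, hfw] at hS
    refine le_trans ?_ hS
    have h1 := hχs_ge p (v+w) hvw
    calc (((inner ℝ p v : ℝ) + t * ξ p : ℝ) : EReal) - χs p
        ≤ (((inner ℝ p v : ℝ) + t * ξ p : ℝ) : EReal)
          - (((inner ℝ p (v+w) : ℝ) - χ (v+w) : ℝ) : EReal) := EReal.sub_le_sub le_rfl h1
      _ = (χ (v+w) : EReal) - (((inner ℝ p w : ℝ) - t * ξ p : ℝ) : EReal) := by
          rw [← EReal.coe_sub, ← EReal.coe_sub]
          norm_cast
          rw [inner_add_right]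
          ring
  -- Lemma B : upper bound by Hopf terms
  have lemB : ∀ (v a : EuclideanSpace ℝ (Fin D)), a ∈ orthant D → ∀ ε : ℝ, 0 < ε →
      ∃ p, p ∈ orthant D ∧
        (χ a : EReal) - tConj D t ξ (a - v) ≤
          ((((inner ℝ p v : ℝ) + t * ξ p : ℝ) : EReal) - χs p) + (ε : EReal) := by
    intro v a ha ε hε
    obtain ⟨p, hpeq⟩ : ∃ p : EuclideanSpace ℝ (Fin D),
        ∀ d, p d = lam d * ((χd d (a d + ε) - χd d (a d))/ε) :=
      ⟨WithLp.toLp 2 (fun d => lam d * ((χd d (a d + ε) - χd d (a d))/ε)), fun _ => rfl⟩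
    have haIci : ∀ d, a d ∈ Set.Ici (0:ℝ) := fun d => ha d
    have haε : ∀ d, a d + ε ∈ Set.Ici (0:ℝ) := fun d => by
      have := ha d; simp only [Set.mem_Ici]; linarith
    have hχmono' : ∀ d, χd d (a d) ≤ χd d (a d + ε) :=
      fun d => hχdmono d (haIci d) (haε d) (by linarith)
    have hporth : p ∈ orthant D := fun d => by
      rw [hpeq]
      exact mul_nonneg (hlam0 d).le (div_nonneg (by linarith [hχmono' d]) hε.le)
    have hple : ∀ d, p d ≤ lam d := by
      intro d
      rw [hpeq]
      have hdist := (hχdlip d).dist_le_mul (a d + ε) (haε d) (a d) (haIci d)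
      rw [Real.dist_eq, Real.dist_eq] at hdist
      simp only [NNReal.coe_one, one_mul] at hdist
      have h1 : χd d (a d + ε) - χd d (a d) ≤ ε := by
        have h2 : |a d + ε - a d| = ε := by rw [add_sub_cancel_left]; exact abs_of_pos hε
        calc χd d (a d + ε) - χd d (a d) ≤ |χd d (a d + ε) - χd d (a d)| := le_abs_self _
          _ ≤ |a d + ε - a d| := hdist
          _ = ε := h2
      calc lam d * ((χd d (a d + ε) - χd d (a d))/ε) ≤ lam d * 1 := by
            refine mul_le_mul_of_nonneg_left ?_ (hlam0 d).le
            rw [div_le_one hε]; exact h1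
        _ = lam d := mul_one _
    have hchord : ∀ d (s : ℝ), 0 ≤ s →
        p d * s - lam d * χd d s ≤ p d * (a d) - lam d * χd d (a d) + p d * ε := by
      intro d s hs
      have hcv : ConvexOn ℝ (Set.Ici 0) (fun s => lam d * χd d s) := by
        have := (hχdconv d).smul (hlam0 d).le
        simpa [smul_eq_mul] using this
      have hmono : MonotoneOn (fun s => lam d * χd d s) (Set.Ici 0) :=
        fun s1 h1 s2 h2 h12 => mul_le_mul_of_nonneg_left (hχdmono d h1 h2 h12) (hlam0 d).le
      have hkey := chord_ineq _ hcv hmono (a d) ε s (ha d) hε hs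
      simp only at hkey
      have hpd : p d = (lam d * χd d (a d + ε) - lam d * χd d (a d))/ε := by
        rw [hpeq]; ring
      rw [← hpd] at hkey
      exact hkey
    have hχs_le : χs p ≤ (((inner ℝ p a : ℝ) - χ a + ε : ℝ) : EReal) := by
      rw [hχsdef]
      refine iSup_le ?_
      rintro ⟨u, hu⟩
      rw [EReal.coe_le_coe_iff]
      rw [hinner, hinner, hχ u, hχ a]
      have hsum1 : ∀ d ∈ Finset.univ, p d * u d - lam d * χd d (u d)
          ≤ (p d * a d - lam d * χd d (a d)) + p d * ε := fun d _ => by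
        have := hchord d (u d) (hu d); linarith
      have h3 : ∑ d, (p d * ε) ≤ ε := by
        rw [← Finset.sum_mul]
        have h5 : (∑ d, p d) ≤ 1 := by
          rw [← hlamsum]; exact Finset.sum_le_sum (fun d _ => hple d)
        calc (∑ d, p d) * ε ≤ 1 * ε := mul_le_mul_of_nonneg_right h5 hε.le
          _ = ε := one_mul ε
      have h4 := Finset.sum_le_sum hsum1
      rw [Finset.sum_add_distrib, Finset.sum_sub_distrib, Finset.sum_sub_distrib] at h4
      linarith
    refine ⟨p, hporth, ?_⟩
    have hstep1 : (χ a : EReal) - tConj D t ξ (a - v)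
        ≤ (χ a : EReal) - (((inner ℝ p (a - v) : ℝ) - t * ξ p : ℝ) : EReal) :=
      EReal.sub_le_sub le_rfl (hf_ge (a - v) p hporth)
    refine hstep1.trans ?_
    have hstep2 : ((((inner ℝ p v : ℝ) + t * ξ p : ℝ) : EReal)
          - (((inner ℝ p a : ℝ) - χ a + ε : ℝ) : EReal)) + (ε : EReal)
        ≤ ((((inner ℝ p v : ℝ) + t * ξ p : ℝ) : EReal) - χs p) + (ε : EReal) :=
      add_le_add_left (EReal.sub_le_sub le_rfl hχs_le) _
    refine le_trans ?_ hstep2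
    rw [← EReal.coe_sub, ← EReal.coe_sub, ← EReal.coe_add]
    rw [EReal.coe_le_coe_iff]
    rw [inner_sub_right]
    exact le_of_eq (by ring)
  -- Lemma C : lattice step
  have lemC : ∀ (p q M m : EuclideanSpace ℝ (Fin D)), p ∈ orthant D → q ∈ orthant D →
      (∀ d, M d = max (p d) (q d)) → (∀ d, m d = min (p d) (q d)) →
      ((((inner ℝ p (x+y) : ℝ) + t * ξ p : ℝ) : EReal) - χs p)
        + ((((inner ℝ q (x+z) : ℝ) + t * ξ q : ℝ) : EReal) - χs q)
      ≤ ((((inner ℝ M (x+y+z) : ℝ) + t * ξ M : ℝ) : EReal) - χs M)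
        + ((((inner ℝ m x : ℝ) + t * ξ m : ℝ) : EReal) - χs m) := by
    intro p q M m hpo hqo hM hm
    have hlin : ((inner ℝ p (x+y) : ℝ) + t * ξ p) + ((inner ℝ q (x+z) : ℝ) + t * ξ q)
        ≤ ((inner ℝ M (x+y+z) : ℝ) + t * ξ M) + ((inner ℝ m x : ℝ) + t * ξ m) := by
      have hsup : ξ p + ξ q ≤ ξ M + ξ m := by
        have h0 := xi_super c hc ξ habs hξ p q hpo hqo
        have hM' : M = WithLp.toLp 2 (fun d => max (p d) (q d)) := PiLp.ext hM
        have hm' : m = WithLp.toLp 2 (fun d => min (p d) (q d)) := PiLp.ext hm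
        rw [hM', hm']; exact h0
      have hsup' := mul_le_mul_of_nonneg_left hsup ht
      rw [mul_add, mul_add] at hsup'
      have hinn : (inner ℝ p (x+y) : ℝ) + (inner ℝ q (x+z) : ℝ)
          ≤ (inner ℝ M (x+y+z) : ℝ) + (inner ℝ m x : ℝ) := by
        rw [hinner, hinner, hinner, hinner, ← Finset.sum_add_distrib, ← Finset.sum_add_distrib]
        refine Finset.sum_le_sum fun d _ => ?_
        have e1 : (x+y) d = x d + y d := rfl
        have e2 : (x+z) d = x d + z d := rfl
        have e3 : (x+y+z) d = x d + y d + z d := rfl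
        rw [e1, e2, e3, hM d, hm d]
        have hMm : max (p d) (q d) * x d + min (p d) (q d) * x d = p d * x d + q d * x d := by
          rw [← add_mul, ← add_mul, max_add_min]
        have hh1 : p d * y d ≤ max (p d) (q d) * y d :=
          mul_le_mul_of_nonneg_right (le_max_left (p d) (q d)) (hy' d)
        have hh2 : q d * z d ≤ max (p d) (q d) * z d :=
          mul_le_mul_of_nonneg_right (le_max_right (p d) (q d)) (hz' d)
        nlinarith [hMm, hh1, hh2]
      linarith
    have hsubmod : χs M + χs m ≤ χs p + χs q := by
      apply EReal.add_le_of_forall_lt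
      intro a' ha' b' hb'
      obtain ⟨u, hu, hau⟩ := hχs_lt M a' ha'
      obtain ⟨u', hu', hbu⟩ := hχs_lt m b' hb'
      obtain ⟨w1, hw1⟩ : ∃ w1 : EuclideanSpace ℝ (Fin D),
          ∀ d, w1 d = if q d ≤ p d then u d else u' d :=
        ⟨WithLp.toLp 2 (fun d => if q d ≤ p d then u d else u' d), fun _ => rfl⟩
      obtain ⟨w2, hw2⟩ : ∃ w2 : EuclideanSpace ℝ (Fin D),
          ∀ d, w2 d = if q d ≤ p d then u' d else u d :=
        ⟨WithLp.toLp 2 (fun d => if q d ≤ p d then u' d else u d), fun _ => rfl⟩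
      have hw1o : w1 ∈ orthant D := fun d => by
        rw [hw1]; split_ifs; exacts [hu d, hu' d]
      have hw2o : w2 ∈ orthant D := fun d => by
        rw [hw2]; split_ifs; exacts [hu' d, hu d]
      have e1 : (inner ℝ M u : ℝ) + (inner ℝ m u' : ℝ)
          = (inner ℝ p w1 : ℝ) + (inner ℝ q w2 : ℝ) := by
        rw [hinner, hinner, hinner, hinner, ← Finset.sum_add_distrib, ← Finset.sum_add_distrib]
        refine Finset.sum_congr rfl fun d _ => ?_
        rw [hM d, hm d, hw1 d, hw2 d]
        by_cases h : q d ≤ p d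
        · rw [if_pos h, if_pos h, max_eq_left h, min_eq_right h]
        · rw [if_neg h, if_neg h, max_eq_right (not_le.1 h).le, min_eq_left (not_le.1 h).le]
          ring
      have e2 : χ u + χ u' = χ w1 + χ w2 := by
        rw [hχ u, hχ u', hχ w1, hχ w2, ← Finset.sum_add_distrib, ← Finset.sum_add_distrib]
        refine Finset.sum_congr rfl fun d _ => ?_
        rw [hw1 d, hw2 d]
        by_cases h : q d ≤ p d
        · rw [if_pos h, if_pos h]
        · rw [if_neg h, if_neg h]; ring
      have hkey : ((inner ℝ M u : ℝ) - χ u) + ((inner ℝ m u' : ℝ) - χ u')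
          = ((inner ℝ p w1 : ℝ) - χ w1) + ((inner ℝ q w2 : ℝ) - χ w2) := by linarith
      calc a' + b'
          ≤ (((inner ℝ M u : ℝ) - χ u : ℝ) : EReal) + (((inner ℝ m u' : ℝ) - χ u' : ℝ) : EReal) :=
            add_le_add hau.le hbu.le
        _ = (((inner ℝ p w1 : ℝ) - χ w1 : ℝ) : EReal)
            + (((inner ℝ q w2 : ℝ) - χ w2 : ℝ) : EReal) := by
            rw [← EReal.coe_add, ← EReal.coe_add]
            exact_mod_cast hkey
        _ ≤ χs p + χs q := add_le_add (hχs_ge p w1 hw1o) (hχs_ge q w2 hw2o)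
    exact ereal_sub_sub_le (hχs_nonneg M) (hχs_nonneg m) hlin hsubmod
  -- Final assembly
  apply ereal_le_of_forall_add
  intro ε hε
  apply EReal.add_le_of_forall_lt
  intro a' ha' b' hb'
  simp only [hopfLax] at ha' hb'
  obtain ⟨⟨a, hao⟩, ha2⟩ := lt_iSup_iff.1 ha'
  obtain ⟨⟨b, hbo⟩, hb2⟩ := lt_iSup_iff.1 hb'
  obtain ⟨p, hpo, hpB⟩ := lemB (x+y) a hao (ε/2) (half_pos hε)
  obtain ⟨q, hqo, hqB⟩ := lemB (x+z) b hbo (ε/2) (half_pos hε)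
  have hxyz : x + y + z ∈ orthant D := fun d =>
    add_nonneg (add_nonneg (hx' d) (hy' d)) (hz' d)
  obtain ⟨M, hM⟩ : ∃ M : EuclideanSpace ℝ (Fin D), ∀ d, M d = max (p d) (q d) :=
    ⟨(WithLp.toLp 2 (fun d => max (p d) (q d)) : EuclideanSpace ℝ (Fin D)), fun _ => rfl⟩
  obtain ⟨m, hm⟩ : ∃ m : EuclideanSpace ℝ (Fin D), ∀ d, m d = min (p d) (q d) :=
    ⟨(WithLp.toLp 2 (fun d => min (p d) (q d)) : EuclideanSpace ℝ (Fin D)), fun _ => rfl⟩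
  have hmaxo : M ∈ orthant D := fun d => (hM d) ▸ le_trans (hpo d) (le_max_left _ _)
  have hmino : m ∈ orthant D := fun d => (hm d) ▸ le_min (hpo d) (hqo d)
  calc a' + b'
      ≤ ((χ a : EReal) - tConj D t ξ (a - (x+y)))
        + ((χ b : EReal) - tConj D t ξ (b - (x+z))) := add_le_add ha2.le hb2.le
    _ ≤ (((((inner ℝ p (x+y) : ℝ) + t * ξ p : ℝ) : EReal) - χs p) + ((ε/2 : ℝ) : EReal))
        + (((((inner ℝ q (x+z) : ℝ) + t * ξ q : ℝ) : EReal) - χs q) + ((ε/2 : ℝ) : EReal)) :=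
        add_le_add hpB hqB
    _ = (((((inner ℝ p (x+y) : ℝ) + t * ξ p : ℝ) : EReal) - χs p)
        + ((((inner ℝ q (x+z) : ℝ) + t * ξ q : ℝ) : EReal) - χs q)) + (ε : EReal) := by
        rw [add_add_add_comm, ← EReal.coe_add, add_halves]
    _ ≤ (((((inner ℝ M (x+y+z) : ℝ) + t * ξ M : ℝ) : EReal) - χs M)
        + ((((inner ℝ m x : ℝ) + t * ξ m : ℝ) : EReal) - χs m)) + (ε : EReal) :=
        add_le_add_left (lemC p q M m hpo hqo hM hm) _
    _ ≤ (hopfLax D t ξ χ (x + y + z) + hopfLax D t ξ χ x) + (ε : EReal) :=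
        add_le_add_left (add_le_add (lemA (x+y+z) hxyz M hmaxo) (lemA x hx m hmino)) _

end MainProof

/-- if `ξ` is given by an absolutely convergent power series with nonnegative
coefficients, `ξ(0) = 0`, and `ξ` is convex on `ℝ_+^D`, then for every `χ ∈ 𝔛` and `t ≥ 0`,
the function `S_tχ` is `ℝ_+^D`-convex, i.e.
`S_tχ(x+y+z) − S_tχ(x+z) ≥ S_tχ(x+y) − S_tχ(x)` for all `x, y, z ∈ ℝ_+^D`
(stated in the equivalent additive form, valid in `EReal`). -/
theorem hopfLax_orthantConvex (D : ℕ) (hD : 1 ≤ D)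
    (c : (Fin D → ℕ) → ℝ) (hc : ∀ α, 0 ≤ c α)
    (ξ : EuclideanSpace ℝ (Fin D) → ℝ)
    (habs : ∀ x : EuclideanSpace ℝ (Fin D),
      Summable (fun α : Fin D → ℕ => |c α * ∏ i, x i ^ α i|))
    (hξ : ∀ x : EuclideanSpace ℝ (Fin D),
      ξ x = ∑' α : Fin D → ℕ, c α * ∏ i, x i ^ α i)
    (hξ0 : ξ 0 = 0)
    (hconv : ConvexOn ℝ (orthant D) ξ)
    (lam : Fin D → ℝ) (hlam : ∀ d, lam d ∈ Set.Ioo (0 : ℝ) 1) (hlamsum : ∑ d, lam d = 1)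
    (χd : Fin D → ℝ → ℝ)
    (hχd0 : ∀ d, χd d 0 = 0)
    (hχdconv : ∀ d, ConvexOn ℝ (Set.Ici (0 : ℝ)) (χd d))
    (hχdlip : ∀ d, LipschitzOnWith 1 (χd d) (Set.Ici (0 : ℝ)))
    (hχdmono : ∀ d, MonotoneOn (χd d) (Set.Ici (0 : ℝ)))
    (χ : EuclideanSpace ℝ (Fin D) → ℝ)
    (hχ : ∀ x : EuclideanSpace ℝ (Fin D), χ x = ∑ d, lam d * χd d (x d))
    (t : ℝ) (ht : 0 ≤ t) :
    ∀ x ∈ orthant D, ∀ y ∈ orthant D, ∀ z ∈ orthant D,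
      hopfLax D t ξ χ (x + y) + hopfLax D t ξ χ (x + z) ≤
        hopfLax D t ξ χ (x + y + z) + hopfLax D t ξ χ x := by
  intro x hx y hy z hz
  exact main_aux c hc ξ habs hξ hξ0 hconv lam hlam hlamsum χd hχd0 hχdconv hχdlip hχdmono
    χ hχ t ht x hx y hy z hz
end
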